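/- arXiv:1803.01765 — 2 statements merged into one kernel-verified Lean document; each statement's English description precedes it below -/
import Mathlib

section
/- Let n ≥ 2 be an integer and let V : ℕ → ℕ satisfy V(i+1) ≤ V(i) ≤ V(i+1) + 1 for all i. Define d : ℕ → ℚ by d(i) = ((2i − n)^2 − n)/(4n) − 2·max(V(i), V(n − i)). Then for every i with 0 ≤ i ≤ n − 1 the following hold: (a) if 2i ≤ n − 2, then d(i) − d(i+1) equals (n − 2i − 1)/n or (−n − 2i − 1)/n; (b) if n is odd and 2i + 1 = n, then d(i) − d(i+1) = 0; (c) if n ≤ 2i, then d(i) − d(i+1) equals (n − 2i − 1)/n or (3n − 2i − 1)/n. -/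
/-- Arithmetic content of the lemma that `S³_n(K)` satisfies the spine obstruction:
case equations for differences of consecutive Ni–Wu style correction terms. -/
theorem spine_obstruction_cases (n : ℕ) (hn : 2 ≤ n) (V : ℕ → ℕ)
    (hV : ∀ i, V (i + 1) ≤ V i ∧ V i ≤ V (i + 1) + 1)
    (d : ℕ → ℚ)
    (hd : ∀ i, d i = ((2 * (i : ℚ) - n) ^ 2 - n) / (4 * n)
      - 2 * (max (V i) (V (n - i)) : ℚ)) :
    ∀ i ≤ n - 1,
      (2 * i ≤ n - 2 →
        d i - d (i + 1) = ((n : ℚ) - 2 * i - 1) / n ∨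
        d i - d (i + 1) = (-(n : ℚ) - 2 * i - 1) / n) ∧
      (Odd n → 2 * i + 1 = n → d i - d (i + 1) = 0) ∧
      (n ≤ 2 * i →
        d i - d (i + 1) = ((n : ℚ) - 2 * i - 1) / n ∨
        d i - d (i + 1) = (3 * (n : ℚ) - 2 * i - 1) / n) := by
  have hanti : Antitone V := antitone_nat_of_succ_le fun k => (hV k).1
  have hn0 : (n : ℚ) ≠ 0 := Nat.cast_ne_zero.mpr (by omega)
  intro i hi
  refine ⟨?_, ?_, ?_⟩
  · intro h
    have m1 : max (V i) (V (n - i)) = V i := max_eq_left (hanti (by omega))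
    have m2 : max (V (i + 1)) (V (n - (i + 1))) = V (i + 1) :=
      max_eq_left (hanti (by omega))
    rw [hd i, hd (i + 1), ← Nat.cast_max, ← Nat.cast_max, m1, m2]
    have h1 := hV i
    have hcase : V i = V (i + 1) ∨ V i = V (i + 1) + 1 := by omega
    rcases hcase with h' | h'
    · left; rw [h']; field_simp; push_cast; ring
    · right; rw [h']; push_cast; field_simp; ring
  · intro _ heq
    have e1 : n - i = i + 1 := by omega
    have e2 : n - (i + 1) = i := by omega
    rw [hd i, hd (i + 1), e1, e2, ← Nat.cast_max, ← Nat.cast_max,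
      max_eq_left (hV i).1, max_eq_right (hV i).1]
    have hnq : (n : ℚ) = 2 * (i : ℚ) + 1 := by exact_mod_cast heq.symm
    have hz : (2 * (i : ℚ) + 1) ≠ 0 := by positivity
    rw [hnq]; field_simp; push_cast; ring
  · intro h
    have e2 : n - (i + 1) = (n - i) - 1 := by omega
    have m1 : max (V i) (V (n - i)) = V (n - i) :=
      max_eq_right (hanti (by omega))
    have m2 : max (V (i + 1)) (V (n - (i + 1))) = V ((n - i) - 1) := by
      rw [e2]; exact max_eq_right (hanti (by omega))
    rw [hd i, hd (i + 1), ← Nat.cast_max, ← Nat.cast_max, m1, m2]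
    have hjj : (n - i) - 1 + 1 = n - i := by omega
    have h1 := hV ((n - i) - 1)
    rw [hjj] at h1
    have hcase : V ((n - i) - 1) = V (n - i) ∨ V ((n - i) - 1) = V (n - i) + 1 := by
      omega
    rcases hcase with h' | h'
    · left; rw [h']; field_simp; push_cast; ring
    · right; rw [h']; push_cast; field_simp; ring
end

section
/- Let p, p', q, q', r, r', e, a, b be integers with gcd(q, r) = 1 and |b·p − a·p'| = 1. Let G be the group presented on four generators x, y, z, h with relations: h commutes with x, h commutes with y, h commutes with z, x^p·h^{p'} = 1, y^q·h^{q'} = 1, z^r·h^{r'} = 1, x·y·z·h^e = 1, and x^a·h^b = 1. Then G is the trivial group. -/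
lemma seifert_aux {G : Type*} [Group G] (x h : G)
    (p p' a b : ℤ) (h1 : x ^ p * h ^ p' = 1) (h2 : x ^ a * h ^ b = 1)
    (hdet : |b * p - a * p'| = 1) : x = 1 ∧ h = 1 := by
  have hxp : x ^ p = (h ^ p')⁻¹ := by
    rw [eq_inv_iff_mul_eq_one]; exact h1
  have hxa : x ^ a = (h ^ b)⁻¹ := by
    rw [eq_inv_iff_mul_eq_one]; exact h2
  have e1 : x ^ (b * p) = h ^ (-(b * p')) := by
    rw [mul_comm b p, zpow_mul, hxp, ← zpow_neg, ← zpow_mul]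
    ring_nf
  have e2 : x ^ (a * p') = h ^ (-(b * p')) := by
    rw [zpow_mul, hxa, ← zpow_neg, ← zpow_mul]
    ring_nf
  have hx1 : x ^ (b * p - a * p') = 1 := by
    rw [zpow_sub, e1, e2, mul_inv_cancel]
  have hd := abs_eq (by norm_num : (0:ℤ) ≤ 1) |>.mp hdet
  have hx : x = 1 := by
    rcases hd with hd | hd
    · simpa [hd] using hx1
    · rw [hd] at hx1; simpa using hx1
  have hp' : h ^ p' = 1 := by simpa [hx] using h1
  have hb : h ^ b = 1 := by simpa [hx] using h2
  have hh1 : h ^ (b * p - a * p') = 1 := by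
    rw [zpow_sub, zpow_mul, mul_comm a p', zpow_mul, hb, hp']
    simp
  have hh : h = 1 := by
    rcases hd with hd | hd
    · simpa [hd] using hh1
    · rw [hd] at hh1; simpa using hh1
  exact ⟨hx, hh⟩

lemma seifert_aux2 {G : Type*} [Group G] (y z : G) (q r : ℤ)
    (hqr : Int.gcd q r = 1) (hy : y ^ q = 1) (hz : z ^ r = 1)
    (hyz : y * z = 1) : y = 1 ∧ z = 1 := by
  have hzy : z = y⁻¹ := (inv_eq_of_mul_eq_one_right hyz).symm
  have hyr : y ^ r = 1 := by
    have := hz; rw [hzy, inv_zpow] at this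
    simpa using this
  have hg : q * Int.gcdA q r + r * Int.gcdB q r = 1 := by
    have := Int.gcd_eq_gcd_ab q r
    omega
  have hy1 : y = 1 := by
    calc y = y ^ (q * Int.gcdA q r + r * Int.gcdB q r) := by rw [hg, zpow_one]
    _ = (y ^ q) ^ Int.gcdA q r * (y ^ r) ^ Int.gcdB q r := by
        rw [zpow_add, zpow_mul, zpow_mul]
    _ = 1 := by rw [hy, hyr]; simp
  exact ⟨hy1, by simp [hzy, hy1]⟩


lemma seifert_core (rels : Set (FreeGroup (Fin 4))) (p p' q q' r r' e a b : ℤ)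
    (hqr : Int.gcd q r = 1) (hdet : |b * p - a * p'| = 1)
    (m4 : FreeGroup.of 0 ^ p * FreeGroup.of 3 ^ p' ∈ rels)
    (m5 : FreeGroup.of 1 ^ q * FreeGroup.of 3 ^ q' ∈ rels)
    (m6 : FreeGroup.of 2 ^ r * FreeGroup.of 3 ^ r' ∈ rels)
    (m7 : FreeGroup.of 0 * FreeGroup.of 1 * FreeGroup.of 2 * FreeGroup.of 3 ^ e ∈ rels)
    (m8 : FreeGroup.of 0 ^ a * FreeGroup.of 3 ^ b ∈ rels) :
    ∀ g : PresentedGroup rels, g = 1 := by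
  let f : FreeGroup (Fin 4) →* PresentedGroup rels :=
    QuotientGroup.mk' (Subgroup.normalClosure rels)
  have hrel : ∀ w ∈ rels, f w = 1 := fun w hw =>
    (QuotientGroup.eq_one_iff w).mpr (Subgroup.subset_normalClosure hw)
  set X := f (FreeGroup.of 0) with hX
  set Y := f (FreeGroup.of 1) with hY
  set Z := f (FreeGroup.of 2) with hZ
  set H := f (FreeGroup.of 3) with hH
  have r4 : X ^ p * H ^ p' = 1 := by
    have := hrel _ m4; simpa [map_mul, map_zpow] using this
  have r5 : Y ^ q * H ^ q' = 1 := by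
    have := hrel _ m5; simpa [map_mul, map_zpow] using this
  have r6 : Z ^ r * H ^ r' = 1 := by
    have := hrel _ m6; simpa [map_mul, map_zpow] using this
  have r7 : X * Y * Z * H ^ e = 1 := by
    have := hrel _ m7; simpa [map_mul, map_zpow] using this
  have r8 : X ^ a * H ^ b = 1 := by
    have := hrel _ m8; simpa [map_mul, map_zpow] using this
  obtain ⟨hx1, hh1⟩ := seifert_aux X H p p' a b r4 r8 hdet
  have hy' : Y ^ q = 1 := by simpa [hh1] using r5
  have hz' : Z ^ r = 1 := by simpa [hh1] using r6
  have hyz : Y * Z = 1 := by simpa [hx1, hh1] using r7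
  obtain ⟨hy1, hz1⟩ := seifert_aux2 Y Z q r hqr hy' hz' hyz
  have hgen : ∀ i : Fin 4, f (FreeGroup.of i) = 1 := by
    intro i
    fin_cases i
    · exact hx1
    · exact hy1
    · exact hz1
    · exact hh1
  have key : ∀ w : FreeGroup (Fin 4), f w = 1 := by
    intro w
    induction w using FreeGroup.induction_on with
    | C1 => simp
    | of i => exact hgen i
    | inv_of i hi => rw [map_inv, hi, inv_one]
    | mul u v hu hv => rw [map_mul, hu, hv, one_mul]
  intro g
  obtain ⟨w, hw⟩ := QuotientGroup.mk'_surjective (Subgroup.normalClosure rels) g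
  rw [← hw]
  exact key w

/-- Killing a singular fiber in the Seifert presentation of `π₁(Σ(p,q,r))`:
the quotient of `⟨x, y, z, h ∣ h central, x^p h^{p'} = y^q h^{q'} = z^r h^{r'}
= xyzh^e = 1⟩` by the normal closure of `x^a h^b` (with `|bp − ap'| = 1` and
`gcd(q, r) = 1`) is the trivial group.  Generators: `x = 0, y = 1, z = 2, h = 3`. -/
theorem seifert_quotient_trivial (p p' q q' r r' e a b : ℤ)
    (hqr : Int.gcd q r = 1) (hdet : |b * p - a * p'| = 1) :
    ∀ g : PresentedGroup
      ({ FreeGroup.of 3 * FreeGroup.of 0 * (FreeGroup.of 3)⁻¹ * (FreeGroup.of 0)⁻¹,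
         FreeGroup.of 3 * FreeGroup.of 1 * (FreeGroup.of 3)⁻¹ * (FreeGroup.of 1)⁻¹,
         FreeGroup.of 3 * FreeGroup.of 2 * (FreeGroup.of 3)⁻¹ * (FreeGroup.of 2)⁻¹,
         FreeGroup.of 0 ^ p * FreeGroup.of 3 ^ p',
         FreeGroup.of 1 ^ q * FreeGroup.of 3 ^ q',
         FreeGroup.of 2 ^ r * FreeGroup.of 3 ^ r',
         FreeGroup.of 0 * FreeGroup.of 1 * FreeGroup.of 2 * FreeGroup.of 3 ^ e,
         FreeGroup.of 0 ^ a * FreeGroup.of 3 ^ b } : Set (FreeGroup (Fin 4))),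
      g = 1 :=
  seifert_core _ p p' q q' r r' e a b hqr hdet
    (by simp) (by simp) (by simp) (by simp) (by simp)
end
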